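/- Let (f_i : U_i → X) be a family of G-equivariant open immersions of k-schemes which is jointly surjective (a Zariski cover of X). Then the induced morphisms Fix_G(f_i) : Fix_G(U_i) → Fix_G(X) are open immersions and are jointly surjective; that is, Fix_G(−) preserves Zariski covers. -/

import Mathlib

open CategoryTheory CategoryTheory.Limits AlgebraicGeometry

noncomputable section
namespace Paper
universe u
variable (k : CommRingCat.{u})
variable {G X U : Scheme.{u}}

/-- The morphism `(m, pr₂) : G ×ₖ X ⟶ X ×ₖ X`. -/
def actionPair (sG : G ⟶ Spec k) (sX : X ⟶ Spec k) (m : pullback sG sX ⟶ X)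
    (hm : m ≫ sX = pullback.snd sG sX ≫ sX) : pullback sG sX ⟶ pullback sX sX :=
  pullback.lift m (pullback.snd sG sX) hm

/-- The fixed-point scheme `Fix_G(X)`. -/
def Fix (sG : G ⟶ Spec k) (sX : X ⟶ Spec k) (m : pullback sG sX ⟶ X)
    (hm : m ≫ sX = pullback.snd sG sX ≫ sX) : Scheme :=
  pullback (actionPair k sG sX m hm) (pullback.diagonal sX)

/-- The canonical projection `Fix_G(X) ⟶ G ×ₖ X`. -/
def fixToProd (sG : G ⟶ Spec k) (sX : X ⟶ Spec k) (m : pullback sG sX ⟶ X)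
    (hm : m ≫ sX = pullback.snd sG sX ≫ sX) :
    Fix k sG sX m hm ⟶ pullback sG sX :=
  pullback.fst (actionPair k sG sX m hm) (pullback.diagonal sX)

/-- The canonical projection `Fix_G(X) ⟶ X`. -/
def fixToBase (sG : G ⟶ Spec k) (sX : X ⟶ Spec k) (m : pullback sG sX ⟶ X)
    (hm : m ≫ sX = pullback.snd sG sX ≫ sX) :
    Fix k sG sX m hm ⟶ X :=
  pullback.snd (actionPair k sG sX m hm) (pullback.diagonal sX)

/-- `id_G ×ₖ f : G ×ₖ U ⟶ G ×ₖ X`. -/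
def prodMap (sG : G ⟶ Spec k) (sU : U ⟶ Spec k) (sX : X ⟶ Spec k)
    (f : U ⟶ X) (hf : f ≫ sX = sU) : pullback sG sU ⟶ pullback sG sX :=
  pullback.map sG sU sG sX (𝟙 G) f (𝟙 (Spec k)) (by simp) (by simp [hf])

theorem fixMap_w (sG : G ⟶ Spec k) (sU : U ⟶ Spec k) (sX : X ⟶ Spec k)
    (mU : pullback sG sU ⟶ U) (hmU : mU ≫ sU = pullback.snd sG sU ≫ sU)
    (mX : pullback sG sX ⟶ X) (hmX : mX ≫ sX = pullback.snd sG sX ≫ sX)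
    (f : U ⟶ X) (hf : f ≫ sX = sU)
    (heq : prodMap k sG sU sX f hf ≫ mX = mU ≫ f) :
    (fixToProd k sG sU mU hmU ≫ prodMap k sG sU sX f hf) ≫ actionPair k sG sX mX hmX
      = (fixToBase k sG sU mU hmU ≫ f) ≫ pullback.diagonal sX := by
  have h1 : fixToProd k sG sU mU hmU ≫ mU = fixToBase k sG sU mU hmU := by
    have hc : fixToProd k sG sU mU hmU ≫ actionPair k sG sU mU hmU
        = fixToBase k sG sU mU hmU ≫ pullback.diagonal sU := pullback.condition
    have := congrArg (· ≫ pullback.fst sU sU) hc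
    simpa only [actionPair, Category.assoc, pullback.lift_fst, pullback.diagonal_fst,
      Category.comp_id] using this
  have h2 : fixToProd k sG sU mU hmU ≫ pullback.snd sG sU = fixToBase k sG sU mU hmU := by
    have hc : fixToProd k sG sU mU hmU ≫ actionPair k sG sU mU hmU
        = fixToBase k sG sU mU hmU ≫ pullback.diagonal sU := pullback.condition
    have := congrArg (· ≫ pullback.snd sU sU) hc
    simpa only [actionPair, Category.assoc, pullback.lift_snd, pullback.diagonal_snd,
      Category.comp_id] using this
  apply pullback.hom_ext
  · simp only [Category.assoc, actionPair, pullback.lift_fst, pullback.diagonal_fst,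
      Category.comp_id]
    rw [heq, ← Category.assoc, h1]
  · simp only [Category.assoc, actionPair, pullback.lift_snd, pullback.diagonal_snd,
      Category.comp_id]
    rw [show prodMap k sG sU sX f hf ≫ pullback.snd sG sX = pullback.snd sG sU ≫ f from by
      simp only [prodMap, pullback.lift_snd]]
    rw [← Category.assoc, h2]

/-- The induced morphism `Fix_G(f) : Fix_G(U) ⟶ Fix_G(X)`. -/
def fixMap (sG : G ⟶ Spec k) (sU : U ⟶ Spec k) (sX : X ⟶ Spec k)
    (mU : pullback sG sU ⟶ U) (hmU : mU ≫ sU = pullback.snd sG sU ≫ sU)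
    (mX : pullback sG sX ⟶ X) (hmX : mX ≫ sX = pullback.snd sG sX ≫ sX)
    (f : U ⟶ X) (hf : f ≫ sX = sU)
    (heq : prodMap k sG sU sX f hf ≫ mX = mU ≫ f) :
    Fix k sG sU mU hmU ⟶ Fix k sG sX mX hmX :=
  pullback.lift (fixToProd k sG sU mU hmU ≫ prodMap k sG sU sX f hf)
    (fixToBase k sG sU mU hmU ≫ f)
    (fixMap_w k sG sU sX mU hmU mX hmX f hf heq)




lemma fix_fst_m (sG : G ⟶ Spec k) (sX : X ⟶ Spec k) (m : pullback sG sX ⟶ X)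
    (hm : m ≫ sX = pullback.snd sG sX ≫ sX) :
    fixToProd k sG sX m hm ≫ m = fixToBase k sG sX m hm := by
  have hc : fixToProd k sG sX m hm ≫ actionPair k sG sX m hm
      = fixToBase k sG sX m hm ≫ pullback.diagonal sX := pullback.condition
  have := congrArg (· ≫ pullback.fst sX sX) hc
  simpa only [actionPair, Category.assoc, pullback.lift_fst, pullback.diagonal_fst,
    Category.comp_id] using this

lemma fix_fst_snd (sG : G ⟶ Spec k) (sX : X ⟶ Spec k) (m : pullback sG sX ⟶ X)
    (hm : m ≫ sX = pullback.snd sG sX ≫ sX) :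
    fixToProd k sG sX m hm ≫ pullback.snd sG sX = fixToBase k sG sX m hm := by
  have hc : fixToProd k sG sX m hm ≫ actionPair k sG sX m hm
      = fixToBase k sG sX m hm ≫ pullback.diagonal sX := pullback.condition
  have := congrArg (· ≫ pullback.snd sX sX) hc
  simpa only [actionPair, Category.assoc, pullback.lift_snd, pullback.diagonal_snd,
    Category.comp_id] using this

lemma fix_ext (sG : G ⟶ Spec k) (sX : X ⟶ Spec k) (m : pullback sG sX ⟶ X)
    (hm : m ≫ sX = pullback.snd sG sX ≫ sX) {T : Scheme}
    {a b : T ⟶ Fix k sG sX m hm}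
    (h1 : a ≫ fixToProd k sG sX m hm = b ≫ fixToProd k sG sX m hm)
    (h2 : a ≫ fixToBase k sG sX m hm = b ≫ fixToBase k sG sX m hm) : a = b :=
  pullback.hom_ext h1 h2

/-- A morphism into the fixed-point scheme. -/
def intoFix (sG : G ⟶ Spec k) (sX : X ⟶ Spec k) (m : pullback sG sX ⟶ X)
    (hm : m ≫ sX = pullback.snd sG sX ≫ sX) {T : Scheme}
    (l1 : T ⟶ pullback sG sX) (l2 : T ⟶ X)
    (h1 : l1 ≫ m = l2) (h2 : l1 ≫ pullback.snd sG sX = l2) : T ⟶ Fix k sG sX m hm :=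
  pullback.lift l1 l2 (by
    apply pullback.hom_ext
    · simpa only [actionPair, Category.assoc, pullback.lift_fst, pullback.diagonal_fst,
        Category.comp_id] using h1
    · simpa only [actionPair, Category.assoc, pullback.lift_snd, pullback.diagonal_snd,
        Category.comp_id] using h2)

lemma intoFix_fixToProd (sG : G ⟶ Spec k) (sX : X ⟶ Spec k)
    (m : pullback sG sX ⟶ X) (hm : m ≫ sX = pullback.snd sG sX ≫ sX) {T : Scheme}
    (l1 : T ⟶ pullback sG sX) (l2 : T ⟶ X)
    (h1 : l1 ≫ m = l2) (h2 : l1 ≫ pullback.snd sG sX = l2) :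
    intoFix k sG sX m hm l1 l2 h1 h2 ≫ fixToProd k sG sX m hm = l1 :=
  pullback.lift_fst _ _ _

lemma intoFix_fixToBase (sG : G ⟶ Spec k) (sX : X ⟶ Spec k)
    (m : pullback sG sX ⟶ X) (hm : m ≫ sX = pullback.snd sG sX ≫ sX) {T : Scheme}
    (l1 : T ⟶ pullback sG sX) (l2 : T ⟶ X)
    (h1 : l1 ≫ m = l2) (h2 : l1 ≫ pullback.snd sG sX = l2) :
    intoFix k sG sX m hm l1 l2 h1 h2 ≫ fixToBase k sG sX m hm = l2 :=
  pullback.lift_snd _ _ _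

lemma prodMap_fst (sG : G ⟶ Spec k) (sU : U ⟶ Spec k) (sX : X ⟶ Spec k)
    (f : U ⟶ X) (hf : f ≫ sX = sU) :
    prodMap k sG sU sX f hf ≫ pullback.fst sG sX = pullback.fst sG sU := by
  simp only [prodMap, pullback.lift_fst, Category.comp_id]

lemma prodMap_snd (sG : G ⟶ Spec k) (sU : U ⟶ Spec k) (sX : X ⟶ Spec k)
    (f : U ⟶ X) (hf : f ≫ sX = sU) :
    prodMap k sG sU sX f hf ≫ pullback.snd sG sX = pullback.snd sG sU ≫ f := by
  simp only [prodMap, pullback.lift_snd]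

section ConeLift

variable (sG : G ⟶ Spec k) (sU : U ⟶ Spec k) (sX : X ⟶ Spec k)

lemma fixMap_fixToProd (mU : pullback sG sU ⟶ U) (hmU : mU ≫ sU = pullback.snd sG sU ≫ sU)
    (mX : pullback sG sX ⟶ X) (hmX : mX ≫ sX = pullback.snd sG sX ≫ sX)
    (f : U ⟶ X) (hf : f ≫ sX = sU)
    (heq : prodMap k sG sU sX f hf ≫ mX = mU ≫ f) :
    fixMap k sG sU sX mU hmU mX hmX f hf heq ≫ fixToProd k sG sX mX hmX
      = fixToProd k sG sU mU hmU ≫ prodMap k sG sU sX f hf :=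
  pullback.lift_fst _ _ _

lemma fixMap_fixToBase (mU : pullback sG sU ⟶ U) (hmU : mU ≫ sU = pullback.snd sG sU ≫ sU)
    (mX : pullback sG sX ⟶ X) (hmX : mX ≫ sX = pullback.snd sG sX ≫ sX)
    (f : U ⟶ X) (hf : f ≫ sX = sU)
    (heq : prodMap k sG sU sX f hf ≫ mX = mU ≫ f) :
    fixMap k sG sU sX mU hmU mX hmX f hf heq ≫ fixToBase k sG sX mX hmX
      = fixToBase k sG sU mU hmU ≫ f :=
  pullback.lift_snd _ _ _

variable (mU : pullback sG sU ⟶ U) (hmU : mU ≫ sU = pullback.snd sG sU ≫ sU)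
    (mX : pullback sG sX ⟶ X) (hmX : mX ≫ sX = pullback.snd sG sX ≫ sX)
    (f : U ⟶ X) (hf : f ≫ sX = sU)
    (heq : prodMap k sG sU sX f hf ≫ mX = mU ≫ f)
    {T : Scheme} (a : T ⟶ U) (b : T ⟶ Fix k sG sX mX hmX)
    (hab : a ≫ f = b ≫ fixToBase k sG sX mX hmX)

/-- First component of the cone lift, into `G ×ₖ U`. -/
def coneL1 : T ⟶ pullback sG sU :=
  pullback.lift (b ≫ fixToProd k sG sX mX hmX ≫ pullback.fst sG sX) a
    (by
      calc (b ≫ fixToProd k sG sX mX hmX ≫ pullback.fst sG sX) ≫ sG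
          = b ≫ fixToProd k sG sX mX hmX ≫ (pullback.fst sG sX ≫ sG) := by
            simp [Category.assoc]
        _ = b ≫ fixToProd k sG sX mX hmX ≫ (pullback.snd sG sX ≫ sX) := by
            rw [pullback.condition]
        _ = b ≫ (fixToProd k sG sX mX hmX ≫ pullback.snd sG sX) ≫ sX := by
            simp [Category.assoc]
        _ = b ≫ fixToBase k sG sX mX hmX ≫ sX := by rw [fix_fst_snd]
        _ = (b ≫ fixToBase k sG sX mX hmX) ≫ sX := by rw [Category.assoc]
        _ = (a ≫ f) ≫ sX := by rw [hab]
        _ = a ≫ sU := by rw [Category.assoc, hf])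

lemma coneL1_fst : coneL1 k sG sU sX mX hmX f hf a b hab ≫ pullback.fst sG sU
    = b ≫ fixToProd k sG sX mX hmX ≫ pullback.fst sG sX := by
  rw [← Category.assoc]; exact pullback.lift_fst _ _ _

lemma coneL1_snd : coneL1 k sG sU sX mX hmX f hf a b hab ≫ pullback.snd sG sU = a :=
  pullback.lift_snd _ _ _

lemma coneL1_prodMap :
    coneL1 k sG sU sX mX hmX f hf a b hab ≫ prodMap k sG sU sX f hf
      = b ≫ fixToProd k sG sX mX hmX := by
  apply pullback.hom_ext
  · rw [Category.assoc, prodMap_fst, coneL1_fst, Category.assoc]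
  · calc coneL1 k sG sU sX mX hmX f hf a b hab ≫ prodMap k sG sU sX f hf
          ≫ pullback.snd sG sX
        = coneL1 k sG sU sX mX hmX f hf a b hab ≫ pullback.snd sG sU ≫ f := by
          rw [prodMap_snd]
      _ = a ≫ f := by rw [← Category.assoc, coneL1_snd]
      _ = b ≫ fixToBase k sG sX mX hmX := hab
      _ = b ≫ fixToProd k sG sX mX hmX ≫ pullback.snd sG sX := by rw [fix_fst_snd]
      _ = (b ≫ fixToProd k sG sX mX hmX) ≫ pullback.snd sG sX := by rw [Category.assoc]

include heq in
lemma coneL1_mU [Mono f] : coneL1 k sG sU sX mX hmX f hf a b hab ≫ mU = a := by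
  rw [← cancel_mono f]
  calc (coneL1 k sG sU sX mX hmX f hf a b hab ≫ mU) ≫ f
      = coneL1 k sG sU sX mX hmX f hf a b hab ≫ prodMap k sG sU sX f hf ≫ mX := by
        rw [Category.assoc, heq]
    _ = (coneL1 k sG sU sX mX hmX f hf a b hab ≫ prodMap k sG sU sX f hf) ≫ mX := by
        rw [Category.assoc]
    _ = (b ≫ fixToProd k sG sX mX hmX) ≫ mX := by rw [coneL1_prodMap]
    _ = b ≫ fixToBase k sG sX mX hmX := by rw [Category.assoc, fix_fst_m]
    _ = a ≫ f := hab.symm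

/-- The lift to `Fix_G(U)` of a cone over `f` and `fixToBase`. -/
def coneLift [Mono f] : T ⟶ Fix k sG sU mU hmU :=
  intoFix k sG sU mU hmU (coneL1 k sG sU sX mX hmX f hf a b hab) a
    (coneL1_mU k sG sU sX mU mX hmX f hf heq a b hab)
    (coneL1_snd k sG sU sX mX hmX f hf a b hab)

lemma coneLift_fixToBase [Mono f] :
    coneLift k sG sU sX mU hmU mX hmX f hf heq a b hab ≫ fixToBase k sG sU mU hmU = a :=
  intoFix_fixToBase _ _ _ _ _ _ _ _ _

lemma coneLift_fixToProd [Mono f] :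
    coneLift k sG sU sX mU hmU mX hmX f hf heq a b hab ≫ fixToProd k sG sU mU hmU
      = coneL1 k sG sU sX mX hmX f hf a b hab :=
  intoFix_fixToProd _ _ _ _ _ _ _ _ _

lemma coneLift_fixMap [Mono f] :
    coneLift k sG sU sX mU hmU mX hmX f hf heq a b hab
      ≫ fixMap k sG sU sX mU hmU mX hmX f hf heq = b := by
  apply fix_ext
  · rw [Category.assoc, fixMap_fixToProd, ← Category.assoc, coneLift_fixToProd,
      coneL1_prodMap]
  · rw [Category.assoc, fixMap_fixToBase, ← Category.assoc, coneLift_fixToBase, hab]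

lemma fix_isPullback [Mono f] :
    IsPullback (fixToBase k sG sU mU hmU)
      (fixMap k sG sU sX mU hmU mX hmX f hf heq) f (fixToBase k sG sX mX hmX) := by
  have w : fixToBase k sG sU mU hmU ≫ f
      = fixMap k sG sU sX mU hmU mX hmX f hf heq ≫ fixToBase k sG sX mX hmX :=
    (fixMap_fixToBase k sG sU sX mU hmU mX hmX f hf heq).symm
  refine IsPullback.of_isLimit (PullbackCone.IsLimit.mk w
    (fun s => coneLift k sG sU sX mU hmU mX hmX f hf heq s.fst s.snd s.condition)
    (fun s => coneLift_fixToBase k sG sU sX mU hmU mX hmX f hf heq s.fst s.snd s.condition)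
    (fun s => coneLift_fixMap k sG sU sX mU hmU mX hmX f hf heq s.fst s.snd s.condition)
    (fun s mm hm1 hm2 => ?_))
  apply fix_ext
  · rw [coneLift_fixToProd]
    apply pullback.hom_ext
    · calc mm ≫ fixToProd k sG sU mU hmU ≫ pullback.fst sG sU
          = mm ≫ fixToProd k sG sU mU hmU ≫ prodMap k sG sU sX f hf
            ≫ pullback.fst sG sX := by rw [prodMap_fst]
        _ = mm ≫ (fixToProd k sG sU mU hmU ≫ prodMap k sG sU sX f hf)
            ≫ pullback.fst sG sX := by simp [Category.assoc]
        _ = mm ≫ (fixMap k sG sU sX mU hmU mX hmX f hf heq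
            ≫ fixToProd k sG sX mX hmX) ≫ pullback.fst sG sX := by
            rw [fixMap_fixToProd]
        _ = (mm ≫ fixMap k sG sU sX mU hmU mX hmX f hf heq)
            ≫ fixToProd k sG sX mX hmX ≫ pullback.fst sG sX := by
            simp [Category.assoc]
        _ = s.snd ≫ fixToProd k sG sX mX hmX ≫ pullback.fst sG sX := by rw [hm2]
        _ = coneL1 k sG sU sX mX hmX f hf s.fst s.snd s.condition
            ≫ pullback.fst sG sU :=
            (coneL1_fst k sG sU sX mX hmX f hf s.fst s.snd s.condition).symm
    · calc mm ≫ fixToProd k sG sU mU hmU ≫ pullback.snd sG sU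
          = mm ≫ fixToBase k sG sU mU hmU := by rw [fix_fst_snd]
        _ = s.fst := hm1
        _ = coneL1 k sG sU sX mX hmX f hf s.fst s.snd s.condition
            ≫ pullback.snd sG sU := (coneL1_snd k sG sU sX mX hmX f hf _ _ _).symm
  · rw [coneLift_fixToBase, hm1]

end ConeLift

/-- `Fix_G(-)` preserves Zariski covers: if `(f i : U i ⟶ X)` is a jointly
surjective family of `G`-equivariant open immersions, then the induced morphisms
`Fix_G(f i) : Fix_G(U i) ⟶ Fix_G(X)` are open immersions and are jointly surjective. -/
theorem statement3 {ι : Type u} (sG : G ⟶ Spec k) (sX : X ⟶ Spec k)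
    (mX : pullback sG sX ⟶ X) (hmX : mX ≫ sX = pullback.snd sG sX ≫ sX)
    (Uf : ι → Scheme.{u}) (sU : ∀ i, Uf i ⟶ Spec k)
    (mU : ∀ i, pullback sG (sU i) ⟶ Uf i)
    (hmU : ∀ i, mU i ≫ sU i = pullback.snd sG (sU i) ≫ sU i)
    (f : ∀ i, Uf i ⟶ X) (hf : ∀ i, f i ≫ sX = sU i)
    (heq : ∀ i, prodMap k sG (sU i) sX (f i) (hf i) ≫ mX = mU i ≫ f i)
    (hopen : ∀ i, IsOpenImmersion (f i))
    (hsurj : ∀ x : X, ∃ i, ∃ u : Uf i, (f i).base u = x) :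
    (∀ i, IsOpenImmersion
        (fixMap k sG (sU i) sX (mU i) (hmU i) mX hmX (f i) (hf i) (heq i))) ∧
    (∀ z : Fix k sG sX mX hmX, ∃ i, ∃ w : Fix k sG (sU i) (mU i) (hmU i),
        (fixMap k sG (sU i) sX (mU i) (hmU i) mX hmX (f i) (hf i) (heq i)).base w = z) := by
  constructor
  · intro i
    have := hopen i
    exact MorphismProperty.of_isPullback (P := @IsOpenImmersion)
      (fix_isPullback k sG (sU i) sX (mU i) (hmU i) mX hmX (f i) (hf i) (heq i))
      (hopen i)
  · intro z
    obtain ⟨i, u, hu⟩ := hsurj ((fixToBase k sG sX mX hmX).base z)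
    have := hopen i
    have sq := fix_isPullback k sG (sU i) sX (mU i) (hmU i) mX hmX (f i) (hf i) (heq i)
    obtain ⟨p, hp1, hp2⟩ := Scheme.Pullback.exists_preimage_pullback
      (f := f i) (g := fixToBase k sG sX mX hmX) u z hu
    refine ⟨i, sq.isoPullback.inv.base p, ?_⟩
    have hcomp : sq.isoPullback.inv ≫ fixMap k sG (sU i) sX (mU i) (hmU i) mX hmX
        (f i) (hf i) (heq i) = pullback.snd (f i) (fixToBase k sG sX mX hmX) := by
      rw [Iso.inv_comp_eq, sq.isoPullback_hom_snd]
    calc (fixMap k sG (sU i) sX (mU i) (hmU i) mX hmX (f i) (hf i) (heq i)).base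
          (sq.isoPullback.inv.base p)
        = ((sq.isoPullback.inv ≫ fixMap k sG (sU i) sX (mU i) (hmU i) mX hmX
            (f i) (hf i) (heq i))).base p := by
          exact (Scheme.Hom.comp_apply _ _ _).symm
      _ = z := by rw [hcomp]; exact hp2

end Paper
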